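/- Let X = (X^1, X^2) be a continuous path of bounded variation on [0,T] with a strict lead-lag structure: there is a partition 0 = t_0 < t_1 < ... < t_{2N} = T such that X^1_{t_{2k}} = X^2_{t_{2k}} =: S_k for all k, on each lead interval [t_{2k-2}, t_{2k-1}] the coordinate X^1 moves from S_{k-1} to S_k while X^2 is constant at S_{k-1}, on each lag interval [t_{2k-1}, t_{2k}] the coordinate X^2 moves from S_{k-1} to S_k while X^1 is constant at S_k, and S_k ≠ S_{k-1} for all k. Then the signed area A(X) = ∫_0^T X^1 dX^2 − ∫_0^T X^2 dX^1 satisfies A(X) = Σ_{k=1}^N (S_k − S_{k-1})^2 > 0. -/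

import Mathlib

open Set

noncomputable def q (t : ℕ → ℝ) (m i : ℕ) : ℝ :=
  t (i / m) + ((i % m : ℕ) : ℝ) / m * (t (i / m + 1) - t (i / m))

lemma q_mul (t : ℕ → ℝ) {m : ℕ} (hm : 0 < m) (j : ℕ) : q t m (j * m) = t j := by
  simp [q, Nat.mul_div_cancel _ hm, Nat.mul_mod_left]

lemma q_succ_eq (t : ℕ → ℝ) {m : ℕ} (hm : 0 < m) (i : ℕ) :
    q t m (i + 1) = t (i / m) + (((i % m : ℕ) : ℝ) + 1) / m * (t (i / m + 1) - t (i / m)) := by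
  have hdm := Nat.div_add_mod i m
  rcases eq_or_lt_of_le (Nat.succ_le_of_lt (Nat.mod_lt i hm)) with h | h
  · -- i % m + 1 = m
    have hmul : (i / m + 1) * m = m * (i / m) + m := by ring
    have hi : i + 1 = (i / m + 1) * m := by omega
    rw [hi, q_mul t hm]
    have hm' : (m : ℝ) ≠ 0 := Nat.cast_ne_zero.mpr hm.ne'
    have hc : ((i % m : ℕ) : ℝ) + 1 = (m : ℝ) := by exact_mod_cast congrArg Nat.cast h
    rw [hc]
    field_simp
    ring
  · -- i % m + 1 < m
    have hi : i + 1 = (i % m + 1) + m * (i / m) := by omega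
    have h1 : (i + 1) / m = i / m := by
      rw [hi, Nat.add_mul_div_left _ _ hm, Nat.div_eq_of_lt h, Nat.zero_add]
    have h2 : (i + 1) % m = i % m + 1 := by
      rw [hi, Nat.add_mul_mod_self_left, Nat.mod_eq_of_lt h]
    rw [q, h1, h2]
    push_cast
    ring

lemma q_sub (t : ℕ → ℝ) {m : ℕ} (hm : 0 < m) (i : ℕ) :
    q t m (i + 1) - q t m i = (t (i / m + 1) - t (i / m)) / m := by
  rw [q_succ_eq t hm]
  have hm' : (m : ℝ) ≠ 0 := Nat.cast_ne_zero.mpr hm.ne'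
  rw [q]
  field_simp
  ring

lemma q_mem (t : ℕ → ℝ) {m : ℕ} (hm : 0 < m) (i : ℕ)
    (h : t (i / m) ≤ t (i / m + 1)) :
    t (i / m) ≤ q t m i ∧ q t m i ≤ t (i / m + 1) := by
  have h0 : (0 : ℝ) ≤ ((i % m : ℕ) : ℝ) / m := by positivity
  have h1 : ((i % m : ℕ) : ℝ) / m ≤ 1 := by
    rw [div_le_one (by exact_mod_cast hm)]
    exact_mod_cast (Nat.mod_lt i hm).le
  constructor <;> rw [q] <;> nlinarith

lemma q_succ_mem (t : ℕ → ℝ) {m : ℕ} (hm : 0 < m) (i : ℕ)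
    (h : t (i / m) ≤ t (i / m + 1)) :
    t (i / m) ≤ q t m (i + 1) ∧ q t m (i + 1) ≤ t (i / m + 1) := by
  have h0 : (0 : ℝ) ≤ (((i % m : ℕ) : ℝ) + 1) / m := by positivity
  have h1 : (((i % m : ℕ) : ℝ) + 1) / m ≤ 1 := by
    rw [div_le_one (by exact_mod_cast hm)]
    have : i % m + 1 ≤ m := Nat.succ_le_of_lt (Nat.mod_lt i hm)
    exact_mod_cast this
  constructor <;> rw [q_succ_eq t hm] <;> nlinarith

lemma sum_blocks {α : Type*} [AddCommMonoid α] (F : ℕ → α) (M m : ℕ) :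
    ∑ i ∈ Finset.range (M * m), F i
      = ∑ j ∈ Finset.range M, ∑ i ∈ Finset.Ico (j * m) (j * m + m), F i := by
  induction M with
  | zero => simp
  | succ M ih =>
      rw [Finset.sum_range_succ, ← ih, Nat.succ_mul, Finset.range_eq_Ico, Finset.range_eq_Ico]
      exact (Finset.sum_Ico_consecutive F (Nat.zero_le (M * m)) (Nat.le_add_right _ m)).symm

lemma telescope (G : ℕ → ℝ) (a m : ℕ) :
    ∑ i ∈ Finset.Ico a (a + m), (G (i + 1) - G i) = G (a + m) - G a := by
  rw [Finset.sum_Ico_eq_sum_range]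
  have := Finset.sum_range_sub (fun r => G (a + r)) m
  simp only [add_zero] at this
  rw [Nat.add_sub_cancel_left, ← this]
  exact Finset.sum_congr rfl fun r _ => by rw [Nat.add_assoc]

lemma div_eq_block {m j i : ℕ} (hi : i ∈ Finset.Ico (j * m) (j * m + m)) :
    i / m = j := by
  rw [Finset.mem_Ico] at hi
  exact Nat.div_eq_of_lt_le hi.1 (by rw [Nat.succ_mul]; exact hi.2)

lemma block_const_g (f g : ℝ → ℝ) (t : ℕ → ℝ) {m : ℕ} (hm : 0 < m) (j : ℕ)
    (hmono : t j ≤ t (j + 1)) (c : ℝ)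
    (hg : ∀ u ∈ Icc (t j) (t (j + 1)), g u = c) :
    ∑ i ∈ Finset.Ico (j * m) (j * m + m),
      f (q t m i) * (g (q t m (i + 1)) - g (q t m i)) = 0 := by
  apply Finset.sum_eq_zero
  intro i hi
  have hd : i / m = j := div_eq_block hi
  have h1 := q_mem t hm i (by rw [hd]; exact hmono)
  have h2 := q_succ_mem t hm i (by rw [hd]; exact hmono)
  rw [hd] at h1 h2
  rw [hg _ ⟨h1.1, h1.2⟩, hg _ ⟨h2.1, h2.2⟩, sub_self, mul_zero]

lemma block_const_f (f g : ℝ → ℝ) (t : ℕ → ℝ) {m : ℕ} (hm : 0 < m) (j : ℕ)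
    (hmono : t j ≤ t (j + 1)) (c : ℝ)
    (hf : ∀ u ∈ Icc (t j) (t (j + 1)), f u = c) :
    ∑ i ∈ Finset.Ico (j * m) (j * m + m),
      f (q t m i) * (g (q t m (i + 1)) - g (q t m i))
      = c * (g (t (j + 1)) - g (t j)) := by
  have h1 : ∀ i ∈ Finset.Ico (j * m) (j * m + m),
      f (q t m i) * (g (q t m (i + 1)) - g (q t m i))
        = c * (g (q t m (i + 1)) - g (q t m i)) := by
    intro i hi
    have hd : i / m = j := div_eq_block hi
    have h1 := q_mem t hm i (by rw [hd]; exact hmono)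
    rw [hd] at h1
    rw [hf _ ⟨h1.1, h1.2⟩]
  rw [Finset.sum_congr rfl h1, ← Finset.mul_sum,
    telescope (fun i => g (q t m i)) (j * m) m]
  have e1 : j * m + m = (j + 1) * m := by ring
  rw [e1, q_mul t hm, q_mul t hm]

def RSIntegralOn (f g : ℝ → ℝ) (a b I : ℝ) : Prop :=
  ∀ ε : ℝ, 0 < ε → ∃ δ : ℝ, 0 < δ ∧ ∀ (n : ℕ) (t ξ : ℕ → ℝ),
    0 < n → t 0 = a → t n = b →
    (∀ i < n, t i ≤ t (i + 1) ∧ t (i + 1) - t i < δ ∧ t i ≤ ξ i ∧ ξ i ≤ t (i + 1)) →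
    |(∑ i ∈ Finset.range n, f (ξ i) * (g (t (i + 1)) - g (t i))) - I| < ε

lemma t_mono_aux (M : ℕ) (t : ℕ → ℝ) (hmono : ∀ i < M, t i < t (i + 1)) :
    ∀ a b : ℕ, a ≤ b → b ≤ M → t a ≤ t b := by
  have key : ∀ d a : ℕ, a + d ≤ M → t a ≤ t (a + d) := by
    intro d
    induction d with
    | zero => intro a _; simp
    | succ d ih =>
        intro a h
        have h1 : t a ≤ t (a + d) := ih a (by omega)
        have h2 : t (a + d) < t (a + d + 1) := hmono (a + d) (by omega)
        calc t a ≤ t (a + d) := h1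
          _ ≤ t (a + (d + 1)) := by rw [← Nat.add_assoc]; exact h2.le
  intro a b hab hbM
  have := key (b - a) a (by omega)
  rwa [Nat.add_sub_cancel' hab] at this

lemma rs_value (f g : ℝ → ℝ) (T : ℝ) (hT : 0 < T) (M : ℕ) (hM : 0 < M)
    (t : ℕ → ℝ) (ht0 : t 0 = 0) (htM : t M = T)
    (hmono : ∀ i < M, t i < t (i + 1))
    (b : ℕ → ℝ)
    (hblock : ∀ j < M, ∀ m : ℕ, 0 < m →
       ∑ i ∈ Finset.Ico (j * m) (j * m + m),
         f (q t m i) * (g (q t m (i + 1)) - g (q t m i)) = b j)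
    (I : ℝ) (hI : RSIntegralOn f g 0 T I) :
    I = ∑ j ∈ Finset.range M, b j := by
  have tmono := t_mono_aux M t hmono
  have key : ∀ ε : ℝ, 0 < ε → |(∑ j ∈ Finset.range M, b j) - I| < ε := by
    intro ε hε
    obtain ⟨δ, hδ, H⟩ := hI ε hε
    obtain ⟨m₀, hm₀⟩ := exists_nat_gt (T / δ)
    set m : ℕ := m₀ + 1 with hmdef
    have hm : 0 < m := Nat.succ_pos _
    have hmR : (0 : ℝ) < m := by exact_mod_cast hm
    have hTm : T / m < δ := by
      rw [div_lt_iff₀ hmR]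
      have : T / δ < m := lt_of_lt_of_le hm₀ (by exact_mod_cast Nat.le_succ m₀)
      rw [div_lt_iff₀ hδ] at this
      linarith
    have hq0 : q t m 0 = 0 := by
      have := q_mul t hm 0
      rwa [Nat.zero_mul, ht0] at this
    have hqM : q t m (M * m) = T := by rw [q_mul t hm M, htM]
    have hsum : ∑ i ∈ Finset.range (M * m),
        f (q t m i) * (g (q t m (i + 1)) - g (q t m i))
        = ∑ j ∈ Finset.range M, b j := by
      rw [sum_blocks]
      exact Finset.sum_congr rfl fun j hj =>
        hblock j (Finset.mem_range.mp hj) m hm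
    have hcond : ∀ i < M * m, q t m i ≤ q t m (i + 1) ∧
        q t m (i + 1) - q t m i < δ ∧ q t m i ≤ q t m i ∧ q t m i ≤ q t m (i + 1) := by
      intro i hi
      have hjM : i / m < M := (Nat.div_lt_iff_lt_mul hm).mpr hi
      have hΔ0 : t (i / m) ≤ t (i / m + 1) := (hmono _ hjM).le
      have hΔT : t (i / m + 1) - t (i / m) ≤ T := by
        have h1 : t (i / m + 1) ≤ t M := tmono _ M (by omega) le_rfl
        have h2 : t 0 ≤ t (i / m) := tmono 0 _ (Nat.zero_le _) (by omega)
        rw [htM] at h1; rw [ht0] at h2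
        linarith
      have hdiff : q t m (i + 1) - q t m i = (t (i / m + 1) - t (i / m)) / m :=
        q_sub t hm i
      have hle : q t m i ≤ q t m (i + 1) := by
        rw [← sub_nonneg, hdiff]
        exact div_nonneg (by linarith) hmR.le
      refine ⟨hle, ?_, le_rfl, hle⟩
      rw [hdiff]
      refine lt_of_le_of_lt ?_ hTm
      gcongr
    have := H (M * m) (q t m) (q t m) (Nat.mul_pos hM hm) hq0 hqM hcond
    rwa [hsum] at this
  by_contra h
  have h2 : (∑ j ∈ Finset.range M, b j) - I ≠ 0 := sub_ne_zero.mpr (Ne.symm h)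
  exact lt_irrefl _ (key _ (abs_pos.mpr h2))

/-- Strict lead-lag implies the signed area equals `∑ (S_k − S_{k-1})² > 0`. -/
theorem leadLag_signed_area
    (T : ℝ) (hT : 0 < T) (X1 X2 : ℝ → ℝ)
    (hc1 : ContinuousOn X1 (Icc 0 T)) (hc2 : ContinuousOn X2 (Icc 0 T))
    (hbv1 : BoundedVariationOn X1 (Icc 0 T)) (hbv2 : BoundedVariationOn X2 (Icc 0 T))
    (N : ℕ) (hN : 1 ≤ N) (t : ℕ → ℝ) (S : ℕ → ℝ)
    (ht0 : t 0 = 0) (htN : t (2 * N) = T)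
    (hmono : ∀ i < 2 * N, t i < t (i + 1))
    (hsync : ∀ k ≤ N, X1 (t (2 * k)) = S k ∧ X2 (t (2 * k)) = S k)
    (hlead : ∀ k, 1 ≤ k → k ≤ N →
      (∀ u ∈ Icc (t (2 * k - 2)) (t (2 * k - 1)), X2 u = S (k - 1)) ∧
        X1 (t (2 * k - 1)) = S k)
    (hlag : ∀ k, 1 ≤ k → k ≤ N →
      ∀ u ∈ Icc (t (2 * k - 1)) (t (2 * k)), X1 u = S k)
    (hstrict : ∀ k, 1 ≤ k → k ≤ N → S k ≠ S (k - 1))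
    (I1 I2 : ℝ)
    (hI1 : RSIntegralOn X1 X2 0 T I1) (hI2 : RSIntegralOn X2 X1 0 T I2) :
    I1 - I2 = ∑ k ∈ Finset.Icc 1 N, (S k - S (k - 1)) ^ 2 ∧ 0 < I1 - I2 := by
  set b1 : ℕ → ℝ := fun j =>
    if j % 2 = 0 then 0 else S (j / 2 + 1) * (S (j / 2 + 1) - S (j / 2)) with hb1def
  set b2 : ℕ → ℝ := fun j =>
    if j % 2 = 0 then S (j / 2) * (S (j / 2 + 1) - S (j / 2)) else 0 with hb2def
  -- block computations
  have hblock1 : ∀ j < 2 * N, ∀ m : ℕ, 0 < m →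
      ∑ i ∈ Finset.Ico (j * m) (j * m + m),
        X1 (q t m i) * (X2 (q t m (i + 1)) - X2 (q t m i)) = b1 j := by
    intro j hj m hm
    have hmono' : t j ≤ t (j + 1) := (hmono j hj).le
    rcases Nat.even_or_odd j with ⟨a, ha⟩ | ⟨a, ha⟩
    · -- lead interval: X2 constant, integral block is 0
      have haN : a < N := by omega
      have hl := (hlead (a + 1) (by omega) (by omega)).1
      have e1 : 2 * (a + 1) - 2 = j := by omega
      have e2 : 2 * (a + 1) - 1 = j + 1 := by omega
      have e3 : (a + 1) - 1 = a := by omega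
      rw [e1, e2, e3] at hl
      rw [block_const_g X1 X2 t hm j hmono' (S a) hl]
      have hmod : j % 2 = 0 := by omega
      simp [hb1def, hmod]
    · -- lag interval: X1 constant S (a+1)
      have haN : a < N := by omega
      have hf := hlag (a + 1) (by omega) (by omega)
      have e1 : 2 * (a + 1) - 1 = j := by omega
      have e2 : 2 * (a + 1) = j + 1 := by omega
      rw [e1, e2] at hf
      rw [block_const_f X1 X2 t hm j hmono' (S (a + 1)) hf]
      have hX2r : X2 (t (j + 1)) = S (a + 1) := by
        rw [← e2]; exact (hsync (a + 1) (by omega)).2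
      have hX2l : X2 (t j) = S a := by
        have hl := (hlead (a + 1) (by omega) (by omega)).1
        have e3 : 2 * (a + 1) - 2 = j - 1 := by omega
        have e4 : 2 * (a + 1) - 1 = j := by omega
        have e5 : (a + 1) - 1 = a := by omega
        rw [e3, e4, e5] at hl
        refine hl (t j) ⟨?_, le_rfl⟩
        have : j - 1 + 1 = j := by omega
        have := (hmono (j - 1) (by omega)).le
        rwa [show j - 1 + 1 = j by omega] at this
      rw [hX2r, hX2l]
      have hmod : j % 2 = 1 := by omega
      have hdiv : j / 2 = a := by omega
      simp [hb1def, hmod, hdiv]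
  have hblock2 : ∀ j < 2 * N, ∀ m : ℕ, 0 < m →
      ∑ i ∈ Finset.Ico (j * m) (j * m + m),
        X2 (q t m i) * (X1 (q t m (i + 1)) - X1 (q t m i)) = b2 j := by
    intro j hj m hm
    have hmono' : t j ≤ t (j + 1) := (hmono j hj).le
    rcases Nat.even_or_odd j with ⟨a, ha⟩ | ⟨a, ha⟩
    · -- lead interval: X2 constant = S a, telescoping in X1
      have haN : a < N := by omega
      have hl := (hlead (a + 1) (by omega) (by omega)).1
      have e1 : 2 * (a + 1) - 2 = j := by omega
      have e2 : 2 * (a + 1) - 1 = j + 1 := by omega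
      have e3 : (a + 1) - 1 = a := by omega
      rw [e1, e2, e3] at hl
      rw [block_const_f X2 X1 t hm j hmono' (S a) hl]
      have hX1r : X1 (t (j + 1)) = S (a + 1) := by
        have := (hlead (a + 1) (by omega) (by omega)).2
        rwa [e2] at this
      have hX1l : X1 (t j) = S a := by
        have := (hsync a (by omega)).1
        rwa [show 2 * a = j by omega] at this
      rw [hX1r, hX1l]
      have hmod : j % 2 = 0 := by omega
      have hdiv : j / 2 = a := by omega
      simp [hb2def, hmod, hdiv]
    · -- lag interval: X1 constant, block is 0
      have haN : a < N := by omega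
      have hf := hlag (a + 1) (by omega) (by omega)
      have e1 : 2 * (a + 1) - 1 = j := by omega
      have e2 : 2 * (a + 1) = j + 1 := by omega
      rw [e1, e2] at hf
      rw [block_const_g X2 X1 t hm j hmono' (S (a + 1)) hf]
      have hmod : j % 2 = 1 := by omega
      simp [hb2def, hmod]
  have hI1v : I1 = ∑ j ∈ Finset.range (2 * N), b1 j :=
    rs_value X1 X2 T hT (2 * N) (by omega) t ht0 htN hmono b1 hblock1 I1 hI1
  have hI2v : I2 = ∑ j ∈ Finset.range (2 * N), b2 j :=
    rs_value X2 X1 T hT (2 * N) (by omega) t ht0 htN hmono b2 hblock2 I2 hI2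
  have hdiff : I1 - I2 = ∑ k ∈ Finset.Icc 1 N, (S k - S (k - 1)) ^ 2 := by
    rw [hI1v, hI2v, ← Finset.sum_sub_distrib]
    rw [show 2 * N = N * 2 from mul_comm 2 N, sum_blocks (fun j => b1 j - b2 j) N 2]
    have hR : ∑ k ∈ Finset.Icc 1 N, (S k - S (k - 1)) ^ 2
        = ∑ a ∈ Finset.range N, (S (a + 1) - S a) ^ 2 := by
      rw [← Finset.Ico_add_one_right_eq_Icc, Finset.sum_Ico_eq_sum_range]
      apply Finset.sum_congr (by simp)
      intro a _
      rw [show 1 + a - 1 = a from by omega, show 1 + a = a + 1 from by omega]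
    rw [hR]
    apply Finset.sum_congr rfl
    intro a _
    rw [Finset.sum_Ico_eq_sum_range]
    have hr : a * 2 + 2 - a * 2 = 2 := by omega
    rw [hr, Finset.sum_range_succ, Finset.sum_range_one]
    have h1 : (a * 2 + 0) % 2 = 0 := by omega
    have h2 : (a * 2 + 0) / 2 = a := by omega
    have h3 : (a * 2 + 1) % 2 = 1 := by omega
    have h4 : (a * 2 + 1) / 2 = a := by omega
    simp only [hb1def, hb2def, h1, h2, h3, h4]
    norm_num
    ring
  refine ⟨hdiff, ?_⟩
  rw [hdiff]
  apply Finset.sum_pos'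
  · intro k _; positivity
  · refine ⟨1, Finset.mem_Icc.mpr ⟨le_rfl, hN⟩, ?_⟩
    have hne : S 1 - S (1 - 1) ≠ 0 := sub_ne_zero.mpr (hstrict 1 le_rfl hN)
    have := sq_nonneg (S 1 - S (1 - 1))
    rcases this.lt_or_eq with h | h
    · simpa [sq] using h
    · exact absurd h.symm (pow_ne_zero 2 hne)
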